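/- Let q ≥ 1, α > 0, and let n_1 ≥ ... ≥ n_q ≥ 0 be counts in decreasing order with positive total, m = #{k : n_k > 0}, and k' the largest index with n_{k'} > 0. The function g(α) = -∑_{l=1}^{k'-1} log(1 + n_l/α) is non-decreasing in α; consequently, for any 0 < α ≤ α', the bound -m log q - ∑_{l=1}^{k'-1} log(1 + n_l/α') is also a valid upper bound on the local local BDeu score -log pGam(α, n) + ∑_k log pGam(α/q, n_k). -/

import Mathlib

/-- `pGam α x = Γ(x+α)/Γ(α)`. -/
noncomputable def pGam (α : ℝ) (x : ℕ) : ℝ := Real.Gamma (x + α) / Real.Gamma α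

lemma pGam_eq {α : ℝ} (hα : 0 < α) (m : ℕ) :
    pGam α m = ∏ i ∈ Finset.range m, ((i : ℝ) + α) := by
  induction m with
  | zero => simp [pGam, div_self (Real.Gamma_pos_of_pos hα).ne']
  | succ m ih =>
      have h1 : ((m : ℝ) + α) ≠ 0 := by positivity
      have : Real.Gamma ((m + 1 : ℕ) + α) = ((m : ℝ) + α) * Real.Gamma (m + α) := by
        have := Real.Gamma_add_one h1
        rw [← this]; push_cast; ring_nf
      rw [pGam, this, Finset.prod_range_succ, ← ih, pGam]
      ring

lemma pGam_pos {α : ℝ} (hα : 0 < α) (m : ℕ) : 0 < pGam α m := by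
  rw [pGam_eq hα]
  exact Finset.prod_pos fun i _ => by positivity

lemma shift_prod {α : ℝ} (hα : 0 < α) (b : ℕ) :
    α * ∏ i ∈ Finset.range b, ((i : ℝ) + 1 + α)
      = (∏ i ∈ Finset.range b, ((i : ℝ) + α)) * ((b : ℝ) + α) := by
  induction b with
  | zero => simp
  | succ b ih =>
      rw [Finset.prod_range_succ, Finset.prod_range_succ, ← mul_assoc, ih]
      push_cast; ring

/-- key super-multiplicativity step with correction factor. -/
lemma pGam_key {α : ℝ} (hα : 0 < α) {a : ℕ} (ha : 1 ≤ a) (b : ℕ) :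
    pGam α a * (pGam α b * (1 + (b : ℝ) / α)) ≤ pGam α (a + b) := by
  rw [pGam_eq hα, pGam_eq hα, pGam_eq hα, Finset.prod_range_add]
  have h1 : 1 + (b : ℝ) / α = ((b : ℝ) + α) / α := by field_simp; ring
  have h2 : (∏ i ∈ Finset.range b, ((i : ℝ) + α)) * (1 + (b : ℝ) / α)
      = ∏ i ∈ Finset.range b, ((i : ℝ) + 1 + α) := by
    rw [h1, mul_div_assoc', div_eq_iff (ne_of_gt hα), ← shift_prod hα b]
    ring
  rw [h2]
  apply mul_le_mul_of_nonneg_left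
  · apply Finset.prod_le_prod
    · intro i _; positivity
    · intro i _
      have : (1 : ℝ) ≤ (a : ℕ) := by exact_mod_cast ha
      push_cast
      linarith
  · exact Finset.prod_nonneg fun i _ => by positivity

/-- chained version. -/
lemma pGam_chain {α : ℝ} (hα : 0 < α) (f : ℕ → ℕ) (hf : ∀ i, 1 ≤ f i) :
    ∀ m : ℕ,
      (∏ k ∈ Finset.range (m + 1), pGam α (f k)) *
          ∏ l ∈ Finset.range m, (1 + (f (l + 1) : ℝ) / α)
        ≤ pGam α (∑ k ∈ Finset.range (m + 1), f k) := by
  intro m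
  induction m with
  | zero => simp
  | succ m ih =>
      rw [Finset.prod_range_succ (f := fun k => pGam α (f k)),
        Finset.prod_range_succ (f := fun l => (1 + (f (l + 1) : ℝ) / α)),
        Finset.sum_range_succ]
      have hS : 1 ≤ ∑ k ∈ Finset.range (m + 1), f k := by
        calc 1 ≤ f 0 := hf 0
          _ ≤ _ := Finset.single_le_sum (f := f) (fun i _ => Nat.zero_le _) (by simp)
      calc (∏ k ∈ Finset.range (m + 1), pGam α (f k)) * pGam α (f (m + 1)) *
            ((∏ l ∈ Finset.range m, (1 + (f (l + 1) : ℝ) / α)) * (1 + (f (m + 1) : ℝ) / α))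
          = ((∏ k ∈ Finset.range (m + 1), pGam α (f k)) *
              ∏ l ∈ Finset.range m, (1 + (f (l + 1) : ℝ) / α)) *
            (pGam α (f (m + 1)) * (1 + (f (m + 1) : ℝ) / α)) := by ring
        _ ≤ pGam α (∑ k ∈ Finset.range (m + 1), f k) *
            (pGam α (f (m + 1)) * (1 + (f (m + 1) : ℝ) / α)) := by
            apply mul_le_mul_of_nonneg_right ih
            have := pGam_pos hα (f (m + 1))
            positivity
        _ ≤ _ := pGam_key hα hS (f (m + 1))

/-- per-cell: dividing the prior by `q` divides the term by at least `q`. -/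
lemma pGam_div_q {α : ℝ} (hα : 0 < α) {q : ℕ} (hq : 1 ≤ q) {m : ℕ} (hm : 1 ≤ m) :
    pGam (α / q) m ≤ pGam α m / q := by
  have hq' : (1 : ℝ) ≤ q := by exact_mod_cast hq
  have hq0 : (0 : ℝ) < q := by linarith
  have hαq : 0 < α / q := by positivity
  obtain ⟨b, rfl⟩ := Nat.exists_eq_succ_of_ne_zero (by omega : m ≠ 0)
  rw [pGam_eq hα, pGam_eq hαq]
  rw [Finset.prod_range_succ', Finset.prod_range_succ']
  push_cast
  have h1 : ((∏ i ∈ Finset.range b, ((i : ℝ) + 1 + α)) * (0 + α)) / q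
      = (∏ i ∈ Finset.range b, ((i : ℝ) + 1 + α)) * ((0 : ℝ) + α / q) := by
    field_simp; ring
  rw [h1]
  apply mul_le_mul_of_nonneg_right
  · apply Finset.prod_le_prod
    · intro i _; positivity
    · intro i _
      have : α / q ≤ α := by
        rw [div_le_iff₀ hq0]; nlinarith
      linarith
  · positivity

/-- Counts in decreasing order (0-based); `k'` is the (0-based) largest index with a
positive count.  The correction `g(α) = -∑_{l<k'} log(1+n_l/α)` is non-decreasing in
`α`, hence the bound computed at a larger `α'` remains valid. -/
theorem stmt_15 (q : ℕ) (hq : 1 ≤ q) (n : ℕ → ℕ) (k' : ℕ)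
    (hdec : ∀ i j, i ≤ j → j < q → n j ≤ n i)
    (hN : 0 < ∑ k ∈ Finset.range q, n k)
    (hk' : k' < q) (hk'pos : 0 < n k')
    (hk'max : ∀ l, k' < l → l < q → n l = 0) :
    ∀ α α' : ℝ, 0 < α → α ≤ α' →
      (-(∑ l ∈ Finset.range k', Real.log (1 + (n l : ℝ) / α))
          ≤ -(∑ l ∈ Finset.range k', Real.log (1 + (n l : ℝ) / α'))) ∧
      (-Real.log (pGam α (∑ k ∈ Finset.range q, n k)) +
          ∑ k ∈ Finset.range q, Real.log (pGam (α / q) (n k))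
        ≤ -(((Finset.range q).filter fun k => 0 < n k).card : ℝ) * Real.log q -
            ∑ l ∈ Finset.range k', Real.log (1 + (n l : ℝ) / α')) := by
  intro α α' hα hαα'
  have hα' : 0 < α' := lt_of_lt_of_le hα hαα'
  have hq' : (1 : ℝ) ≤ q := by exact_mod_cast hq
  have hq0 : (0 : ℝ) < q := by linarith
  -- positivity of each count up to k'
  have hpos : ∀ k, k ≤ k' → 1 ≤ n k := fun k hk =>
    le_trans hk'pos (hdec k k' hk hk')
  -- Part 1: monotonicity of g
  have part1 : ∀ β β' : ℝ, 0 < β → β ≤ β' →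
      ∑ l ∈ Finset.range k', Real.log (1 + (n l : ℝ) / β')
        ≤ ∑ l ∈ Finset.range k', Real.log (1 + (n l : ℝ) / β) := by
    intro β β' hβ hββ'
    have hβ' : 0 < β' := lt_of_lt_of_le hβ hββ'
    apply Finset.sum_le_sum
    intro l _
    apply Real.log_le_log (by positivity)
    have : (n l : ℝ) / β' ≤ (n l : ℝ) / β := by gcongr
    linarith
  constructor
  · simp only [neg_le_neg_iff]
    exact part1 α α' hα hαα'
  -- Part 2
  -- the filter is range (k'+1)
  have hfilter : (Finset.range q).filter (fun k => 0 < n k) = Finset.range (k' + 1) := by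
    ext k
    simp only [Finset.mem_filter, Finset.mem_range]
    constructor
    · rintro ⟨hkq, hkpos⟩
      by_contra h
      push_neg at h
      exact absurd (hk'max k (by omega) hkq) (by omega)
    · intro hk
      exact ⟨by omega, hpos k (by omega)⟩
  -- sums restrict to range (k'+1)
  have hsub : Finset.range (k' + 1) ⊆ Finset.range q := by
    intro x hx; simp only [Finset.mem_range] at *; omega
  have hNsum : ∑ k ∈ Finset.range q, n k = ∑ k ∈ Finset.range (k' + 1), n k := by
    rw [eq_comm]
    apply Finset.sum_subset hsub
    intro x hx hx'
    simp only [Finset.mem_range] at hx hx'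
    exact hk'max x (by omega) hx
  -- main product inequality via pGam_chain with reversed indexing
  set f : ℕ → ℕ := fun i => n (k' - i) with hf
  have hf1 : ∀ i, 1 ≤ f i := fun i => hpos _ (Nat.sub_le _ _)
  have hchain := pGam_chain hα f hf1 k'
  have hrs : ∑ k ∈ Finset.range (k' + 1), f k = ∑ k ∈ Finset.range (k' + 1), n k := by
    have := Finset.sum_range_reflect (fun j => n j) (k' + 1)
    simpa [hf] using this
  have hrp : ∏ k ∈ Finset.range (k' + 1), pGam α (f k)
      = ∏ k ∈ Finset.range (k' + 1), pGam α (n k) := by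
    have := Finset.prod_range_reflect (fun j => pGam α (n j)) (k' + 1)
    simpa [hf] using this
  have hrf : ∏ l ∈ Finset.range k', (1 + (f (l + 1) : ℝ) / α)
      = ∏ l ∈ Finset.range k', (1 + (n l : ℝ) / α) := by
    have := Finset.prod_range_reflect (fun j => (1 + (n j : ℝ) / α)) k'
    have heq : ∀ l, f (l + 1) = n (k' - 1 - l) := by
      intro l; simp only [hf]; congr 1; omega
    calc ∏ l ∈ Finset.range k', (1 + (f (l + 1) : ℝ) / α)
        = ∏ l ∈ Finset.range k', (1 + (n (k' - 1 - l) : ℝ) / α) := by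
          apply Finset.prod_congr rfl; intro l _; rw [heq]
      _ = _ := this
  rw [hrs, hrp, hrf] at hchain
  -- log of the chain inequality
  have hlogchain :
      (∑ k ∈ Finset.range (k' + 1), Real.log (pGam α (n k))) +
        ∑ l ∈ Finset.range k', Real.log (1 + (n l : ℝ) / α)
      ≤ Real.log (pGam α (∑ k ∈ Finset.range (k' + 1), n k)) := by
    have hL : 0 < (∏ k ∈ Finset.range (k' + 1), pGam α (n k)) *
        ∏ l ∈ Finset.range k', (1 + (n l : ℝ) / α) := by
      apply mul_pos
      · exact Finset.prod_pos fun k _ => pGam_pos hα _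
      · exact Finset.prod_pos fun l _ => by positivity
    have := Real.log_le_log hL hchain
    rw [Real.log_mul (ne_of_gt (Finset.prod_pos fun k _ => pGam_pos hα _))
        (ne_of_gt (Finset.prod_pos fun l _ => by positivity)),
      Real.log_prod (fun k _ => ne_of_gt (pGam_pos hα _)),
      Real.log_prod (fun l _ => by positivity)] at this
    exact this
  -- per-cell bound summed
  have hcell : ∀ k, k ≤ k' →
      Real.log (pGam (α / q) (n k)) ≤ Real.log (pGam α (n k)) - Real.log q := by
    intro k hk
    have h1 := pGam_div_q hα hq (hpos k hk)
    have h2 : 0 < pGam (α / q) (n k) := pGam_pos (by positivity) _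
    have := Real.log_le_log h2 h1
    rwa [Real.log_div (ne_of_gt (pGam_pos hα _)) (ne_of_gt hq0)] at this
  -- sum over range q of log pGam (α/q) restricts
  have hzsum : ∑ k ∈ Finset.range q, Real.log (pGam (α / q) (n k))
      = ∑ k ∈ Finset.range (k' + 1), Real.log (pGam (α / q) (n k)) := by
    rw [eq_comm]
    apply Finset.sum_subset hsub
    intro x hx hx'
    simp only [Finset.mem_range] at hx hx'
    have : n x = 0 := hk'max x (by omega) hx
    have hαq : (0:ℝ) < α / q := by positivity
    simp [this, pGam, div_self (Real.Gamma_pos_of_pos hαq).ne']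
  have hsum2 : ∑ k ∈ Finset.range (k' + 1), Real.log (pGam (α / q) (n k))
      ≤ (∑ k ∈ Finset.range (k' + 1), Real.log (pGam α (n k))) -
          (k' + 1 : ℝ) * Real.log q := by
    have := Finset.sum_le_sum (f := fun k => Real.log (pGam (α / q) (n k)))
      (g := fun k => Real.log (pGam α (n k)) - Real.log q)
      (s := Finset.range (k' + 1))
      (fun k hk => hcell k (by simpa [Finset.mem_range, Nat.lt_succ_iff] using hk))
    rw [Finset.sum_sub_distrib, Finset.sum_const, Finset.card_range, nsmul_eq_mul] at this
    push_cast at this ⊢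
    linarith
  have hmono := part1 α α' hα hαα'
  rw [hfilter, Finset.card_range, hNsum, hzsum]
  push_cast
  linarith
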